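/- Let X, Y be real Banach spaces, U ⊆ X open, and f : U → Y a continuous map which is Gâteaux differentiable at every point of U. Assume that for every x ∈ U the derivative f'(x) admits a right inverse R(x) ∈ L(Y,X), i.e., f'(x) ∘ R(x) = Id_Y, and that κ := sup_{x ∈ U} ‖R(x)‖ < ∞. Then for every open ball B(x₀, δ) ⊆ U one has B(f(x₀), δ/κ) ⊆ f(B(x₀, δ)); in particular f(U) is open in Y and f is an open map. -/

import Mathlib

open Filter Topology Metric Set Bornology

noncomputable section

/-- Upper right-hand Dini directional derivative of `φ` at `x` in direction `v`. -/
def diniUpper {X : Type*} [NormedAddCommGroup X] [NormedSpace ℝ X]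
    (φ : X → ℝ) (x v : X) : ℝ :=
  Filter.limsup (fun t : ℝ => (φ (x + t • v) - φ x) / t) (𝓝[>] (0 : ℝ))

/-- `J` is a pseudo-Jacobian of `f` at `x`: `J` is a nonempty set of bounded linear
operators such that for every continuous linear functional `p` on `Y` and every
direction `v`, the upper Dini derivative of `p ∘ f` at `x` in direction `v` is bounded
by `sup {p (T v) : T ∈ J}`. -/
def IsPseudoJacobianAt {X Y : Type*} [NormedAddCommGroup X] [NormedSpace ℝ X]
    [NormedAddCommGroup Y] [NormedSpace ℝ Y]
    (f : X → Y) (J : Set (X →L[ℝ] Y)) (x : X) : Prop :=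
  J.Nonempty ∧ ∀ (p : Y →L[ℝ] ℝ) (v : X),
    diniUpper (fun z => p (f z)) x v ≤ sSup ((fun T : X →L[ℝ] Y => p (T v)) '' J)


/-- `f` is Gâteaux differentiable at `x` with derivative `f'`. -/
def HasGateauxDerivAt {X Y : Type*} [NormedAddCommGroup X] [NormedSpace ℝ X]
    [NormedAddCommGroup Y] [NormedSpace ℝ Y]
    (f : X → Y) (f' : X →L[ℝ] Y) (x : X) : Prop :=
  ∀ v : X, Filter.Tendsto (fun t : ℝ => t⁻¹ • (f (x + t • v) - f x))
    (𝓝[≠] (0 : ℝ)) (𝓝 (f' v))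

/-- Ekeland's variational principle (continuous, nonnegative version). -/
lemma ekeland_aux {α : Type*} [MetricSpace α] [CompleteSpace α]
    {F : α → ℝ} (hF : Continuous F) (hF0 : ∀ x, 0 ≤ F x) {ε : ℝ} (hε : 0 < ε) (x₀ : α) :
    ∃ xb, F xb + ε * dist xb x₀ ≤ F x₀ ∧ ∀ x, F xb ≤ F x + ε * dist x xb := by
  have key : ∀ (n : ℕ) (z : α), ∃ w : α, (F w + ε * dist w z ≤ F z) ∧
      ∀ x, F x + ε * dist x z ≤ F z → F w ≤ F x + (1/2 : ℝ)^n := by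
    intro n z
    set S : Set α := {x | F x + ε * dist x z ≤ F z} with hS
    have hzS : z ∈ S := by simp [hS]
    have hne : (F '' S).Nonempty := ⟨F z, z, hzS, rfl⟩
    have hbdd : BddBelow (F '' S) := ⟨0, by rintro _ ⟨x, -, rfl⟩; exact hF0 x⟩
    have hlt : sInf (F '' S) < sInf (F '' S) + (1/2 : ℝ)^n :=
      lt_add_of_pos_right _ (by positivity)
    obtain ⟨_, ⟨w, hwS, rfl⟩, hwa⟩ := exists_lt_of_csInf_lt hne hlt
    refine ⟨w, hwS, fun x hx => ?_⟩
    have : sInf (F '' S) ≤ F x := csInf_le hbdd ⟨x, hx, rfl⟩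
    linarith
  let seq : ℕ → α := fun n => Nat.rec x₀ (fun n z => (key n z).choose) n
  have hseq0 : seq 0 = x₀ := rfl
  have hA : ∀ n, F (seq (n+1)) + ε * dist (seq (n+1)) (seq n) ≤ F (seq n) :=
    fun n => ((key n (seq n)).choose_spec).1
  have hB : ∀ n x, F x + ε * dist x (seq n) ≤ F (seq n) → F (seq (n+1)) ≤ F x + (1/2:ℝ)^n :=
    fun n => ((key n (seq n)).choose_spec).2
  have tele : ∀ m n, m ≤ n → ε * dist (seq n) (seq m) + F (seq n) ≤ F (seq m) := by
    intro m n h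
    induction n, h using Nat.le_induction with
    | base => simp
    | succ n hmn ih =>
      have h1 := hA n
      have h2 : dist (seq (n+1)) (seq m) ≤ dist (seq (n+1)) (seq n) + dist (seq n) (seq m) :=
        dist_triangle _ _ _
      nlinarith [dist_nonneg (x := seq (n+1)) (y := seq n)]
  have hmono : Antitone (fun n => F (seq n)) := by
    apply antitone_nat_of_succ_le
    intro n
    have := hA n
    nlinarith [dist_nonneg (x := seq (n+1)) (y := seq n), hε]
  have hbdd : BddBelow (Set.range fun n => F (seq n)) := ⟨0, by rintro _ ⟨n, rfl⟩; exact hF0 _⟩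
  set L : ℝ := ⨅ n, F (seq n) with hL
  have hFlim : Tendsto (fun n => F (seq n)) atTop (𝓝 L) :=
    tendsto_atTop_ciInf hmono hbdd
  have hLle : ∀ n, L ≤ F (seq n) := fun n => ciInf_le hbdd n
  have hcauchy : CauchySeq seq := by
    apply cauchySeq_of_le_tendsto_0 (fun N => (F (seq N) - L) / ε)
    · intro n m N hn hm
      rcases le_total m n with h | h
      · have h1 := tele m n h
        have h2 : F (seq m) ≤ F (seq N) := hmono hm
        have h3 := hLle n
        rw [le_div_iff₀ hε]
        have hc := mul_comm (dist (seq n) (seq m)) ε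
        linarith
      · have h1 := tele n m h
        have h2 : F (seq n) ≤ F (seq N) := hmono hn
        have h3 := hLle m
        rw [dist_comm (seq n) (seq m), le_div_iff₀ hε]
        have hc := mul_comm (dist (seq m) (seq n)) ε
        linarith
    · have : Tendsto (fun N => F (seq N) - L) atTop (𝓝 (L - L)) :=
        hFlim.sub tendsto_const_nhds
      simpa using this.div_const ε
  obtain ⟨xb, hxb⟩ := cauchySeq_tendsto_of_complete hcauchy
  have hFxb : Tendsto (fun n => F (seq n)) atTop (𝓝 (F xb)) :=
    (hF.tendsto xb).comp hxb
  have hLxb : L = F xb := tendsto_nhds_unique hFlim hFxb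
  have teleLim : ∀ m, ε * dist xb (seq m) + F xb ≤ F (seq m) := by
    intro m
    have h1 : Tendsto (fun n => ε * dist (seq n) (seq m) + F (seq n)) atTop
        (𝓝 (ε * dist xb (seq m) + F xb)) :=
      (tendsto_const_nhds.mul (hxb.dist tendsto_const_nhds)).add hFxb
    refine le_of_tendsto h1 ?_
    filter_upwards [eventually_ge_atTop m] with n hn using tele m n hn
  refine ⟨xb, ?_, ?_⟩
  · have := teleLim 0
    rw [hseq0] at this
    linarith
  · intro x
    by_contra hcon
    push_neg at hcon
    have hxn : ∀ n, F x + ε * dist x (seq n) ≤ F (seq n) := by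
      intro n
      have h1 : dist x (seq n) ≤ dist x xb + dist xb (seq n) := dist_triangle _ _ _
      have h2 := teleLim n
      nlinarith
    have hFle : F xb ≤ F x := by
      have h1 : Tendsto (fun n => F (seq (n+1))) atTop (𝓝 (F xb)) :=
        hFxb.comp (tendsto_add_atTop_nat 1)
      have h2 : Tendsto (fun n : ℕ => F x + (1/2:ℝ)^n) atTop (𝓝 (F x + 0)) :=
        tendsto_const_nhds.add (tendsto_pow_atTop_nhds_zero_of_lt_one (by norm_num) (by norm_num))
      rw [add_zero] at h2
      exact le_of_tendsto_of_tendsto' h1 h2 (fun n => hB n x (hxn n))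
    nlinarith [dist_nonneg (x := x) (y := xb), mul_nonneg hε.le (dist_nonneg (x := x) (y := xb))]



set_option maxHeartbeats 1000000 in
lemma ekeland_ball {X Y : Type*} [NormedAddCommGroup X] [NormedSpace ℝ X] [CompleteSpace X]
    [NormedAddCommGroup Y] [NormedSpace ℝ Y]
    {U : Set X}
    {f : X → Y} (hf : ContinuousOn f U)
    {f' : X → X →L[ℝ] Y} (hf' : ∀ x ∈ U, HasGateauxDerivAt f (f' x) x)
    {R : X → Y →L[ℝ] X}
    (hR : ∀ x ∈ U, (f' x).comp (R x) = ContinuousLinearMap.id ℝ Y)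
    {κ : ℝ} (hκ : ∀ x ∈ U, ‖R x‖ ≤ κ) (hκpos : 0 < κ)
    (x₀ : X) (δ : ℝ) (hδ : 0 < δ) (hsub : Metric.ball x₀ δ ⊆ U) :
    Metric.ball (f x₀) (δ / κ) ⊆ f '' Metric.ball x₀ δ := by
  intro y hy
  rw [mem_ball, dist_comm] at hy
  set a := dist (f x₀) y with ha
  rcases eq_or_lt_of_le (dist_nonneg : (0:ℝ) ≤ a) with ha0 | hapos
  · exact ⟨x₀, mem_ball_self hδ, dist_eq_zero.mp ha0.symm⟩
  have hκa : κ * a < δ := by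
    rw [lt_div_iff₀ hκpos] at hy; nlinarith [mul_comm a κ]
  set δ' : ℝ := (κ * a + δ) / 2 with hδ'
  have hδ'1 : κ * a < δ' := by rw [hδ']; linarith
  have hδ'2 : δ' < δ := by rw [hδ']; linarith
  have hδ'pos : 0 < δ' := by positivity
  set ε : ℝ := (a / δ' + 1 / κ) / 2 with hε
  have hadiv : a / δ' < 1 / κ := by
    rw [div_lt_div_iff₀ hδ'pos hκpos]; nlinarith
  have hε1 : a / δ' < ε := by rw [hε]; linarith
  have hε2 : ε < 1 / κ := by rw [hε]; linarith
  have hεpos : 0 < ε := lt_of_le_of_lt (by positivity) hε1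
  have hεκ : ε * κ < 1 := by rw [lt_div_iff₀ hκpos] at hε2; linarith
  have haε : a < ε * δ' := by rw [div_lt_iff₀ hδ'pos] at hε1; nlinarith [mul_comm ε δ']
  set s : Set X := Metric.closedBall x₀ δ' with hs
  have hsU : s ⊆ U := (closedBall_subset_ball hδ'2).trans hsub
  haveI : CompleteSpace s := (Metric.isClosed_closedBall (x := x₀) (ε := δ')).completeSpace_coe
  set F : s → ℝ := fun x => dist (f x) y with hF
  have hFcont : Continuous F := ((hf.mono hsU).restrict).dist continuous_const
  set x₀' : s := ⟨x₀, mem_closedBall_self hδ'pos.le⟩ with hx₀'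
  obtain ⟨xb, h1, h2⟩ := ekeland_aux hFcont (fun x => dist_nonneg) hεpos x₀'
  have hFx₀ : F x₀' = a := rfl
  set b := F xb with hb
  have hb0 : 0 ≤ b := dist_nonneg
  have hdeq : dist xb x₀' = dist (xb : X) x₀ := Subtype.dist_eq xb x₀'
  have hdist : dist (xb : X) x₀ < δ' := by
    rw [hFx₀] at h1
    have hd : ε * dist (xb:X) x₀ < ε * δ' := by rw [← hdeq]; linarith
    exact (mul_lt_mul_iff_right₀ hεpos).mp hd
  have hxbU : (xb : X) ∈ U := hsU xb.2
  -- claim b = 0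
  have hbzero : b = 0 := by
    by_contra hbne
    have hbpos : 0 < b := lt_of_le_of_ne hb0 (Ne.symm hbne)
    set v : X := R xb (y - f xb) with hv
    have hv1 : f' (xb : X) v = y - f xb := by
      have h := congrArg (fun T : Y →L[ℝ] Y => T (y - f xb)) (hR xb hxbU)
      simp only [ContinuousLinearMap.comp_apply, ContinuousLinearMap.id_apply] at h
      exact h
    have hvnorm : ‖v‖ ≤ κ * b := by
      have h3 : ‖R (xb:X) (y - f xb)‖ ≤ ‖R (xb:X)‖ * ‖y - f xb‖ :=
        (R (xb:X)).le_opNorm _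
      have h4 : ‖y - f (xb:X)‖ = b := by
        rw [norm_sub_rev]; exact (dist_eq_norm _ _).symm
      calc ‖v‖ ≤ ‖R (xb:X)‖ * ‖y - f xb‖ := h3
        _ ≤ κ * b := by
            rw [h4]
            exact mul_le_mul_of_nonneg_right (hκ _ hxbU) hb0
    have hG : Tendsto (fun t : ℝ => t⁻¹ • (f ((xb:X) + t • v) - f xb))
        (𝓝[>] (0:ℝ)) (𝓝 (y - f xb)) := by
      have := (hf' (xb:X) hxbU) v
      rw [hv1] at this
      exact this.mono_left (nhdsWithin_mono 0 (fun t ht => ne_of_gt ht))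
    set c : ℝ := b * (1 - ε * κ) with hc
    have hcpos : 0 < c := by apply mul_pos hbpos; linarith
    have hev1 : ∀ᶠ t in 𝓝[>] (0:ℝ),
        ‖t⁻¹ • (f ((xb:X) + t • v) - f xb) - (y - f xb)‖ < c := by
      have := Metric.tendsto_nhds.mp hG c hcpos
      simpa [dist_eq_norm] using this
    set r : ℝ := min 1 ((δ' - dist (xb:X) x₀) / (‖v‖ + 1)) with hr
    have hrpos : 0 < r := by
      apply lt_min one_pos
      apply div_pos (by linarith) (by positivity)
    have hev2 : Ioo (0:ℝ) r ∈ 𝓝[>] (0:ℝ) :=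
      Ioo_mem_nhdsGT_of_mem ⟨le_refl 0, hrpos⟩
    obtain ⟨t, ht1, ht0, htr⟩ := (hev1.and hev2).exists
    set x' : X := (xb:X) + t • v with hx'
    have htv : ‖t • v‖ = t * ‖v‖ := by
      rw [norm_smul, Real.norm_eq_abs, abs_of_pos ht0]
    have hx's : x' ∈ s := by
      rw [hs, mem_closedBall]
      have hd : dist x' (xb:X) = t * ‖v‖ := by
        rw [hx', dist_eq_norm]; simpa using htv
      have h5 : t * ‖v‖ ≤ t * (‖v‖ + 1) := by nlinarith
      have h6 : t * (‖v‖ + 1) < δ' - dist (xb:X) x₀ := by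
        have : t < (δ' - dist (xb:X) x₀) / (‖v‖ + 1) := lt_of_lt_of_le htr (min_le_right _ _)
        rw [lt_div_iff₀ (by positivity)] at this
        linarith
      calc dist x' x₀ ≤ dist x' (xb:X) + dist (xb:X) x₀ := dist_triangle _ _ _
        _ ≤ δ' := by rw [hd]; linarith
    have ht1' : t < 1 := lt_of_lt_of_le htr (min_le_left _ _)
    set w : Y := t⁻¹ • (f x' - f xb) - (y - f xb) with hw
    have hfx' : f x' - y = (1 - t) • (f xb - y) + t • w := by
      have htne : t ≠ 0 := ne_of_gt ht0
      rw [hw, smul_sub t, smul_smul, mul_inv_cancel₀ htne, one_smul]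
      module
    have hFx' : dist (f x') y ≤ (1 - t) * b + t * ‖w‖ := by
      rw [dist_eq_norm, hfx']
      calc ‖(1 - t) • (f xb - y) + t • w‖ ≤ ‖(1 - t) • (f xb - y)‖ + ‖t • w‖ :=
            norm_add_le _ _
        _ = (1 - t) * ‖f xb - y‖ + t * ‖w‖ := by
            rw [norm_smul, norm_smul, Real.norm_eq_abs, Real.norm_eq_abs,
              abs_of_nonneg (by linarith : (0:ℝ) ≤ 1 - t), abs_of_pos ht0]
        _ = (1 - t) * b + t * ‖w‖ := by
            have hbn : b = ‖f (xb:X) - y‖ := dist_eq_norm _ _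
            rw [hbn]
    have h2' := h2 ⟨x', hx's⟩
    have hdx' : dist (⟨x', hx's⟩ : s) xb = t * ‖v‖ := by
      rw [Subtype.dist_eq]
      show dist x' (xb:X) = t * ‖v‖
      rw [hx', dist_eq_norm]; simpa using htv
    rw [hdx'] at h2'
    have hFx'' : F ⟨x', hx's⟩ = dist (f x') y := rfl
    rw [hFx''] at h2'
    -- b ≤ dist (f x') y + ε * (t * ‖v‖)
    have hkey : b ≤ (1 - t) * b + t * ‖w‖ + ε * (t * (κ * b)) := by
      have h7 : ε * (t * ‖v‖) ≤ ε * (t * (κ * b)) := by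
        apply mul_le_mul_of_nonneg_left _ hεpos.le
        exact mul_le_mul_of_nonneg_left hvnorm ht0.le
      linarith [h2', hFx', h7]
    have hwlt : ‖w‖ < b * (1 - ε * κ) := ht1
    have hprod : 0 < t * (b * (1 - ε * κ) - ‖w‖) := mul_pos ht0 (sub_pos.mpr hwlt)
    have e1 : (1 - t) * b + t * ‖w‖ + ε * (t * (κ * b))
        = b - t * (b * (1 - ε * κ) - ‖w‖) := by ring
    rw [e1] at hkey
    linarith
  exact ⟨xb, by rw [mem_ball]; linarith [hdist, hδ'2],
    by have : dist (f (xb:X)) y = 0 := hbzero; exact dist_eq_zero.mp this⟩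

/-- Ekeland's open mapping theorem: if `f` is continuous and Gâteaux differentiable
on the open set `U`, each derivative `f'(x)` has a right inverse `R x`, and
`κ` is a uniform bound for `‖R x‖`, then `B(f x₀, δ/κ) ⊆ f (B(x₀, δ))` for every
ball `B(x₀, δ) ⊆ U`; in particular `f(U)` is open and `f` is an open map. -/
theorem ekeland_open_mapping
    {X Y : Type*} [NormedAddCommGroup X] [NormedSpace ℝ X] [CompleteSpace X]
    [NormedAddCommGroup Y] [NormedSpace ℝ Y] [CompleteSpace Y]
    {U : Set X} (hUopen : IsOpen U)
    {f : X → Y} (hf : ContinuousOn f U)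
    {f' : X → X →L[ℝ] Y} (hf' : ∀ x ∈ U, HasGateauxDerivAt f (f' x) x)
    {R : X → Y →L[ℝ] X}
    (hR : ∀ x ∈ U, (f' x).comp (R x) = ContinuousLinearMap.id ℝ Y)
    {κ : ℝ} (hκ : ∀ x ∈ U, ‖R x‖ ≤ κ) :
    (∀ (x₀ : X) (δ : ℝ), 0 < δ → Metric.ball x₀ δ ⊆ U →
        Metric.ball (f x₀) (δ / κ) ⊆ f '' Metric.ball x₀ δ) ∧
      IsOpen (f '' U) ∧
      ∀ W : Set X, W ⊆ U → IsOpen W → IsOpen (f '' W) := by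
  rcases Set.eq_empty_or_nonempty U with hU | ⟨x, hx⟩
  · subst hU
    refine ⟨fun x₀ δ hδ hsub => absurd (hsub (mem_ball_self hδ)) (notMem_empty _), ?_, ?_⟩
    · simp
    · intro W hW _
      rw [Set.subset_empty_iff] at hW
      subst hW
      simp
  · have hκ0 : 0 ≤ κ := (norm_nonneg _).trans (hκ x hx)
    rcases hκ0.eq_or_lt with hκ0' | hκpos
    · have hRx : R x = 0 := by
        have h := hκ x hx
        rw [← hκ0'] at h
        exact norm_le_zero_iff.mp h
      have hid : ∀ z : Y, z = 0 := by
        intro z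
        have h := congrArg (fun T : Y →L[ℝ] Y => T z) (hR x hx)
        simp [hRx] at h
        exact h.symm
      haveI : Subsingleton Y := ⟨fun a b => by rw [hid a, hid b]⟩
      refine ⟨?_, isOpen_discrete _, fun W _ _ => isOpen_discrete _⟩
      intro x₀ δ hδ hsub yy hyy
      rw [← hκ0', div_zero] at hyy
      simp at hyy
    · have key : ∀ (x₀ : X) (δ : ℝ), 0 < δ → Metric.ball x₀ δ ⊆ U →
          Metric.ball (f x₀) (δ/κ) ⊆ f '' Metric.ball x₀ δ :=
        fun x₀ δ hδ hsub => ekeland_ball hf hf' hR hκ hκpos x₀ δ hδ hsub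
      have hopen : ∀ W : Set X, W ⊆ U → IsOpen W → IsOpen (f '' W) := by
        intro W hWU hWopen
        rw [Metric.isOpen_iff]
        rintro _ ⟨z, hzW, rfl⟩
        obtain ⟨δ, hδ, hball⟩ := Metric.isOpen_iff.mp hWopen z hzW
        exact ⟨δ/κ, div_pos hδ hκpos,
          (key z δ hδ (hball.trans hWU)).trans (Set.image_mono hball)⟩
      exact ⟨key, hopen U subset_rfl hUopen, hopen⟩

end
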